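/- Let H be a k-uniform hypergraph and e an edge of H. Then BE(H) > BE(H − e), where H − e is the hypergraph obtained by deleting edge e. -/

import Mathlib

open Matrix BigOperators Finset

/-- Incidence matrix of a hypergraph on vertex set `Fin n` with edges `E : Fin m → Finset (Fin n)`. -/
noncomputable def inc {n m : ℕ} (E : Fin m → Finset (Fin n)) : Matrix (Fin n) (Fin m) ℝ :=
  fun v e => if v ∈ E e then 1 else 0

/-- Adjacency matrix of the line multigraph: `(e,f)`-entry is `|E e ∩ E f|` for `e ≠ f`, `0` on diagonal. -/
noncomputable def lineAdj {n m : ℕ} (E : Fin m → Finset (Fin n)) : Matrix (Fin m) (Fin m) ℝ :=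
  fun e f => if e = f then 0 else ((E e ∩ E f).card : ℝ)

/-- Adjacency matrix of the clique multigraph: `(u,v)`-entry is the number of edges containing both. -/
noncomputable def cliqueAdj {n m : ℕ} (E : Fin m → Finset (Fin n)) : Matrix (Fin n) (Fin n) ℝ :=
  fun u v => if u = v then 0 else ((univ.filter fun e => u ∈ E e ∧ v ∈ E e).card : ℝ)

/-- Degree of a vertex: number of edges containing it. -/
def deg {n m : ℕ} (E : Fin m → Finset (Fin n)) (v : Fin n) : ℕ :=
  (univ.filter fun e => v ∈ E e).card

section Aux
variable {N : Type*} [Fintype N] [DecidableEq N]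

set_option linter.unusedSectionVars false in
/-- Diagonal entry of a conjugated matrix is a quadratic form in a column. -/
lemma conj_diag_eq (U M : Matrix N N ℝ) (i : N) :
    ((star U) * M * U) i i = (fun u => U u i) ⬝ᵥ (M *ᵥ fun u => U u i) := by
  simp only [mul_apply, mulVec, dotProduct, star_apply, star_trivial, conjTranspose_apply,
    Finset.sum_mul, Finset.mul_sum]
  rw [Finset.sum_comm]
  refine Finset.sum_congr rfl fun u _ => Finset.sum_congr rfl fun w _ => by ring

lemma trace_conj (U : Matrix.unitaryGroup N ℝ) (M : Matrix N N ℝ) :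
    ((star (U : Matrix N N ℝ)) * M * (U : Matrix N N ℝ)).trace = M.trace := by
  rw [trace_mul_cycle, Matrix.mem_unitaryGroup_iff.mp U.2, one_mul]

/-- Port helper: the positive semidefinite square root (removed from Mathlib). -/
noncomputable def Matrix.PosSemidef.sqrt {A : Matrix N N ℝ} (hA : A.PosSemidef) : Matrix N N ℝ :=
  (hA.1.eigenvectorUnitary : Matrix N N ℝ) * diagonal (fun i => Real.sqrt (hA.1.eigenvalues i)) *
    (star hA.1.eigenvectorUnitary : Matrix N N ℝ)

lemma Matrix.PosSemidef.posSemidef_sqrt {A : Matrix N N ℝ} (hA : A.PosSemidef) :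
    hA.sqrt.PosSemidef := by
  unfold Matrix.PosSemidef.sqrt
  have hD : (diagonal (fun i => Real.sqrt (hA.1.eigenvalues i))).PosSemidef :=
    posSemidef_diagonal_iff.mpr fun i => Real.sqrt_nonneg _
  simpa [star_eq_conjTranspose] using
    hD.mul_mul_conjTranspose_same (hA.1.eigenvectorUnitary : Matrix N N ℝ)

lemma Matrix.PosSemidef.sqrt_mul_self {A : Matrix N N ℝ} (hA : A.PosSemidef) :
    hA.sqrt * hA.sqrt = A := by
  unfold Matrix.PosSemidef.sqrt
  have hU : (star hA.1.eigenvectorUnitary : Matrix N N ℝ) *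
      (hA.1.eigenvectorUnitary : Matrix N N ℝ) = 1 := Unitary.coe_star_mul_self _
  have hsp := hA.1.spectral_theorem
  rw [Unitary.conjStarAlgAut_apply] at hsp
  conv_rhs => rw [hsp]
  simp only [Matrix.mul_assoc]
  rw [← Matrix.mul_assoc (star _ : Matrix N N ℝ) _ _, hU, Matrix.one_mul,
    ← Matrix.mul_assoc (diagonal _), diagonal_mul_diagonal]
  congr 2
  ext i j
  simp [diagonal_apply, Real.mul_self_sqrt (hA.eigenvalues_nonneg _)]

/-- The trace of the positive semidefinite square root is the sum of the square roots of the
eigenvalues. -/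
lemma trace_sqrt {A : Matrix N N ℝ} (hA : A.PosSemidef) :
    (hA.sqrt).trace = ∑ i, Real.sqrt (hA.1.eigenvalues i) := by
  rw [Matrix.PosSemidef.sqrt, trace_mul_cycle, Unitary.coe_star_mul_self, one_mul,
    trace_diagonal]

/-- Key comparison lemma: if `A ≤ B` in the Loewner order (expressed via quadratic forms) and
`trace A < trace B`, then the sum of square roots of eigenvalues strictly increases. -/
lemma key {A B : Matrix N N ℝ} (hA : A.PosSemidef) (hB : B.PosSemidef)
    (hA' : A.IsHermitian) (hB' : B.IsHermitian)
    (hle : ∀ x : N → ℝ, x ⬝ᵥ (A *ᵥ x) ≤ x ⬝ᵥ (B *ᵥ x))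
    (htr : A.trace < B.trace) :
    ∑ i, Real.sqrt (hA'.eigenvalues i) < ∑ i, Real.sqrt (hB'.eigenvalues i) := by
  classical
  clear hB
  set U : Matrix N N ℝ := (hB'.eigenvectorUnitary : Matrix N N ℝ) with hUdef
  set c : N → N → ℝ := fun i u => U u i with hcdef
  have hdiag : ∀ (M : Matrix N N ℝ) (i : N),
      ((star U) * M * U) i i = c i ⬝ᵥ (M *ᵥ c i) := fun M i => conj_diag_eq U M i
  have htrconj : ∀ M : Matrix N N ℝ, ∑ i, c i ⬝ᵥ (M *ᵥ c i) = M.trace := by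
    intro M
    have := trace_conj hB'.eigenvectorUnitary M
    rw [← this]
    exact (Finset.sum_congr rfl fun i _ => (hdiag M i).symm)
  have hb : ∀ i, c i ⬝ᵥ (B *ᵥ c i) = hB'.eigenvalues i := by
    intro i
    have := congrFun (congrFun (show (star U) * B * U = diagonal (RCLike.ofReal ∘ hB'.eigenvalues) from by
      simpa only [Unitary.conjStarAlgAut_star_apply, Unitary.coe_star, hUdef] using
        hB'.conjStarAlgAut_star_eigenvectorUnitary) i) i
    rw [hdiag B i] at this
    simpa using this
  have hAnn : ∀ x : N → ℝ, 0 ≤ x ⬝ᵥ (A *ᵥ x) := by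
    intro x; simpa using hA.dotProduct_mulVec_nonneg x
  have hexists : ∃ i : N, c i ⬝ᵥ (A *ᵥ c i) < c i ⬝ᵥ (B *ᵥ c i) := by
    by_contra h
    push_neg at h
    have hsum : ∑ i, c i ⬝ᵥ (B *ᵥ c i) ≤ ∑ i, c i ⬝ᵥ (A *ᵥ c i) :=
      Finset.sum_le_sum fun i _ => h i
    rw [htrconj A, htrconj B] at hsum
    exact absurd htr (not_lt.mpr hsum)
  set S := hA.sqrt with hSdef
  have hS2 : S * S = A := hA.sqrt_mul_self
  have hSsym : Sᵀ = S := by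
    have := hA.posSemidef_sqrt.1
    rwa [IsHermitian, conjTranspose_eq_transpose_of_trivial] at this
  have hSq : ∀ x : N → ℝ, (S *ᵥ x) ⬝ᵥ (S *ᵥ x) = x ⬝ᵥ (A *ᵥ x) := by
    intro x
    rw [← hS2, ← mulVec_mulVec, dotProduct_mulVec x, ← mulVec_transpose, hSsym]
  have hcol : ∀ i, c i ⬝ᵥ c i = 1 := by
    intro i
    have hU1 : (star U) * U = 1 := Unitary.coe_star_mul_self hB'.eigenvectorUnitary
    have := congrFun (congrFun hU1 i) i
    simp only [mul_apply, conjTranspose_apply, star_trivial, one_apply_eq] at this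
    simpa [dotProduct, hcdef] using this
  have hCS : ∀ i, c i ⬝ᵥ (S *ᵥ c i) ≤ Real.sqrt (c i ⬝ᵥ (A *ᵥ c i)) := by
    intro i
    have h0 : 0 ≤ c i ⬝ᵥ (S *ᵥ c i) := by simpa using hA.posSemidef_sqrt.dotProduct_mulVec_nonneg (c i)
    rw [Real.le_sqrt h0 (hAnn (c i))]
    have hcs := Finset.sum_mul_sq_le_sq_mul_sq Finset.univ (c i) (fun u => (S *ᵥ c i) u)
    calc (c i ⬝ᵥ (S *ᵥ c i)) ^ 2
        ≤ (∑ u, c i u ^ 2) * (∑ u, (S *ᵥ c i) u ^ 2) := hcs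
      _ = (c i ⬝ᵥ c i) * ((S *ᵥ c i) ⬝ᵥ (S *ᵥ c i)) := by
          simp [dotProduct, sq]
      _ = c i ⬝ᵥ (A *ᵥ c i) := by rw [hcol i, one_mul, hSq]
  calc ∑ i, Real.sqrt (hA'.eigenvalues i)
      = S.trace := (trace_sqrt hA).symm
    _ = ∑ i, c i ⬝ᵥ (S *ᵥ c i) := (htrconj S).symm
    _ ≤ ∑ i, Real.sqrt (c i ⬝ᵥ (A *ᵥ c i)) := Finset.sum_le_sum fun i _ => hCS i
    _ < ∑ i, Real.sqrt (c i ⬝ᵥ (B *ᵥ c i)) := by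
        obtain ⟨i0, hi0⟩ := hexists
        exact Finset.sum_lt_sum (fun i _ => Real.sqrt_le_sqrt (hle (c i)))
          ⟨i0, Finset.mem_univ i0, Real.sqrt_lt_sqrt (hAnn (c i0)) hi0⟩
    _ = ∑ i, Real.sqrt (hB'.eigenvalues i) :=
        Finset.sum_congr rfl fun i _ => by rw [hb i]

end Aux

/-- Quadratic form of `C * Cᵀ`. -/
lemma inc_quadform {n p : ℕ} (C : Matrix (Fin n) (Fin p) ℝ) (x : Fin n → ℝ) :
    x ⬝ᵥ ((C * Cᵀ) *ᵥ x) = ∑ e, ((Cᵀ *ᵥ x) e) ^ 2 := by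
  rw [← mulVec_mulVec, dotProduct_mulVec x, ← mulVec_transpose]
  simp [dotProduct, sq]

/-- Trace of `inc F * (inc F)ᵀ` for a `k`-uniform family with `p` edges. -/
lemma inc_trace {n p k : ℕ} (F : Fin p → Finset (Fin n)) (hF : ∀ e, (F e).card = k) :
    (inc F * (inc F)ᵀ).trace = (p : ℝ) * k := by
  classical
  rw [Matrix.trace]
  simp only [diag_apply, mul_apply, transpose_apply, inc]
  rw [Finset.sum_comm]
  have h1 : ∀ e : Fin p,
      (∑ u : Fin n, (if u ∈ F e then (1:ℝ) else 0) * (if u ∈ F e then (1:ℝ) else 0)) = (k : ℝ) := by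
    intro e
    rw [← hF e]
    simp [Finset.sum_boole, Finset.filter_univ_mem]
  rw [Finset.sum_congr rfl fun e _ => h1 e]
  simp [mul_comm]

/-- deleting an edge strictly decreases the incidence energy. -/
theorem stmt6 {n m k : ℕ} (E : Fin (m + 1) → Finset (Fin n)) (j : Fin (m + 1))
    (hk2 : 2 ≤ k) (hk : ∀ e, (E e).card = k)
    (hQ : (inc E * (inc E)ᵀ).IsHermitian)
    (hQ' : (inc (E ∘ j.succAbove) * (inc (E ∘ j.succAbove))ᵀ).IsHermitian) :
    (∑ i, Real.sqrt (hQ'.eigenvalues i)) < ∑ i, Real.sqrt (hQ.eigenvalues i) := by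
  classical
  have hBps : (inc E * (inc E)ᵀ).PosSemidef := by
    have h := Matrix.posSemidef_self_mul_conjTranspose (inc E)
    rwa [conjTranspose_eq_transpose_of_trivial] at h
  have hAps : (inc (E ∘ j.succAbove) * (inc (E ∘ j.succAbove))ᵀ).PosSemidef := by
    have h := Matrix.posSemidef_self_mul_conjTranspose (inc (E ∘ j.succAbove))
    rwa [conjTranspose_eq_transpose_of_trivial] at h
  refine key hAps hBps hQ' hQ ?_ ?_
  · intro x
    rw [inc_quadform, inc_quadform]
    have hg : ∀ e : Fin m,
        ((inc (E ∘ j.succAbove))ᵀ *ᵥ x) e = ((inc E)ᵀ *ᵥ x) (j.succAbove e) := fun e => rfl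
    calc ∑ e : Fin m, ((inc (E ∘ j.succAbove))ᵀ *ᵥ x) e ^ 2
        = ∑ e : Fin m, ((inc E)ᵀ *ᵥ x) (j.succAbove e) ^ 2 :=
          Finset.sum_congr rfl fun e _ => by rw [hg e]
      _ ≤ ((inc E)ᵀ *ᵥ x) j ^ 2 + ∑ e : Fin m, ((inc E)ᵀ *ᵥ x) (j.succAbove e) ^ 2 :=
          le_add_of_nonneg_left (sq_nonneg _)
      _ = ∑ e : Fin (m + 1), ((inc E)ᵀ *ᵥ x) e ^ 2 :=
          (Fin.sum_univ_succAbove (fun e => ((inc E)ᵀ *ᵥ x) e ^ 2) j).symm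
  · rw [inc_trace E hk, inc_trace (E ∘ j.succAbove) (fun e => hk _)]
    have hkpos : (0 : ℝ) < k := by
      have : (0 : ℕ) < k := lt_of_lt_of_le two_pos hk2
      exact_mod_cast this
    have hm : (m : ℝ) < ((m + 1 : ℕ) : ℝ) := by exact_mod_cast Nat.lt_succ_self m
    exact mul_lt_mul_of_pos_right hm hkpos
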